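/- Let p, q be coprime integers with q ≥ 1 and let n ∈ {0,…,q−1}. Then the generalized quadratic Gauss sum G(−p,n,q) vanishes if and only if 4 divides 2n + 2 − q. In particular, for q odd, G(−p,n,q) ≠ 0 for every n. -/

import Mathlib

open Complex Finset

/-- The generalized quadratic Gauss sum `G(-p, n, q) = ∑_{k=0}^{q-1} e(( -p k² + n k)/q)`. -/
noncomputable def Gm (p : ℤ) (q : ℕ) (n : ℤ) : ℂ :=
  ∑ k ∈ Finset.range q,
    Complex.exp (2 * Real.pi * Complex.I *
      ((-(p : ℂ) * (k : ℂ) ^ 2 + (n : ℂ) * (k : ℂ)) / (q : ℂ)))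

namespace GmAux

/-- primitive q-th root of unity -/
noncomputable def zet (q : ℕ) : ℂ := Complex.exp (2 * Real.pi * Complex.I / q)

/-- `χ a = ζ^a` -/
noncomputable def chi (q : ℕ) (a : ℤ) : ℂ := zet q ^ a

lemma zet_ne_zero (q : ℕ) : zet q ≠ 0 := Complex.exp_ne_zero _

lemma prim {q : ℕ} (hq : 1 ≤ q) : IsPrimitiveRoot (zet q) q :=
  Complex.isPrimitiveRoot_exp q (by omega)

lemma chi_add (q : ℕ) (a b : ℤ) : chi q (a + b) = chi q a * chi q b :=
  zpow_add₀ (zet_ne_zero q) a b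

lemma chi_eq_one_iff {q : ℕ} (hq : 1 ≤ q) (a : ℤ) : chi q a = 1 ↔ (q : ℤ) ∣ a :=
  (prim hq).zpow_eq_one_iff_dvd a

lemma chi_dvd {q : ℕ} (hq : 1 ≤ q) {a : ℤ} (h : (q : ℤ) ∣ a) : chi q a = 1 :=
  (chi_eq_one_iff hq a).mpr h

lemma exp_eq_chi (q : ℕ) (a : ℤ) :
    Complex.exp (2 * Real.pi * Complex.I * ((a : ℂ) / (q : ℂ))) = chi q a := by
  rw [chi, zet, ← Complex.exp_int_mul]
  ring_nf

lemma conj_chi (q : ℕ) (a : ℤ) : (starRingEnd ℂ) (chi q a) = chi q (-a) := by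
  rw [chi, chi, map_zpow₀, zpow_neg, ← inv_zpow]
  congr 1
  rw [zet, ← Complex.exp_conj, ← Complex.exp_neg]
  congr 1
  simp [map_div₀, Complex.conj_I, map_ofNat]
  ring

end GmAux

namespace GmAux

/-- the phase polynomial -/
def f (p n k : ℤ) : ℤ := -p * k ^ 2 + n * k

lemma chi_f_congr {q : ℕ} (hq : 1 ≤ q) (p n : ℤ) {a b : ℤ} (h : a % (q : ℤ) = b % (q : ℤ)) :
    chi q (f p n a) = chi q (f p n b) := by
  obtain ⟨t, ht⟩ : (q : ℤ) ∣ b - a := Int.ModEq.dvd h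
  have hb : b = a + q * t := by linarith
  have : f p n b = f p n a + (q : ℤ) * (-p * (2 * a * t + q * t ^ 2) + n * t) := by
    subst hb; unfold f; ring
  rw [this, chi_add, chi_dvd hq ⟨_, rfl⟩, mul_one]

lemma Gm_eq (p : ℤ) (q : ℕ) (n : ℤ) :
    Gm p q n = ∑ k ∈ Finset.range q, chi q (f p n (k : ℤ)) := by
  unfold Gm
  refine Finset.sum_congr rfl fun k _ => ?_
  rw [← exp_eq_chi q (f p n (k : ℤ))]
  congr 1
  unfold f
  push_cast
  ring

lemma sum_zmod {q : ℕ} [NeZero q] (g : ZMod q → ℂ) :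
    ∑ x : ZMod q, g x = ∑ k ∈ Finset.range q, g (k : ZMod q) := by
  refine Finset.sum_nbij' (fun x => x.val) (fun k => (k : ZMod q)) ?_ ?_ ?_ ?_ ?_
  · intro x _; exact Finset.mem_range.mpr (ZMod.val_lt x)
  · intro k _; exact Finset.mem_univ _
  · intro x _; exact ZMod.natCast_rightInverse x
  · intro k hk; exact ZMod.val_cast_of_lt (Finset.mem_range.mp hk)
  · intro x _; rw [ZMod.natCast_rightInverse x]

/-- geometric-sum evaluation -/
lemma sum_chi_mul {q : ℕ} (hq : 1 ≤ q) [NeZero q] (c : ℤ) :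
    ∑ y : ZMod q, chi q (c * (y.val : ℤ)) = if (c : ZMod q) = 0 then (q : ℂ) else 0 := by
  have hrw : ∀ y : ZMod q, chi q (c * (y.val : ℤ)) = (zet q ^ c) ^ (y.val : ℕ) := by
    intro y
    rw [chi, zpow_mul, ← zpow_natCast (zet q ^ c) y.val]
  have hwq : (zet q ^ c) ^ q = 1 := by
    rw [← zpow_natCast (zet q ^ c) q, ← zpow_mul, mul_comm]
    exact chi_dvd hq ⟨c, rfl⟩
  rw [Finset.sum_congr rfl fun y _ => hrw y, sum_zmod (fun x : ZMod q => (zet q ^ c) ^ x.val)]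
  have hvals : ∀ k ∈ Finset.range q, (zet q ^ c) ^ ((k : ZMod q)).val = (zet q ^ c) ^ k := by
    intro k hk; rw [ZMod.val_cast_of_lt (Finset.mem_range.mp hk)]
  rw [Finset.sum_congr rfl hvals]
  by_cases h1 : zet q ^ c = 1
  · have : (c : ZMod q) = 0 := by
      rw [ZMod.intCast_zmod_eq_zero_iff_dvd]
      exact ((chi_eq_one_iff hq c).mp h1)
    simp [h1, this]
  · have hc0 : ¬ ((c : ZMod q) = 0) := by
      intro h
      exact h1 (chi_dvd hq ((ZMod.intCast_zmod_eq_zero_iff_dvd c q).mp h))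
    rw [if_neg hc0, geom_sum_eq h1, hwq]
    simp

end GmAux

namespace GmAux

variable {q : ℕ}

lemma Gm_eq_zmod (hq : 1 ≤ q) [NeZero q] (p n : ℤ) :
    Gm p q n = ∑ x : ZMod q, chi q (f p n (x.val : ℤ)) := by
  rw [Gm_eq, sum_zmod (fun x : ZMod q => chi q (f p n (x.val : ℤ)))]
  refine Finset.sum_congr rfl fun k _ => ?_
  refine (chi_f_congr hq p n ?_).symm
  rw [ZMod.val_natCast]
  push_cast
  exact Int.emod_emod_of_dvd _ dvd_rfl

lemma val_add_congr [NeZero q] (y m : ZMod q) :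
    (((y + m).val : ℤ)) % (q : ℤ) = ((y.val : ℤ) + (m.val : ℤ)) % (q : ℤ) := by
  rw [ZMod.val_add]
  push_cast
  exact Int.emod_emod_of_dvd _ dvd_rfl

lemma normsq (hq : 1 ≤ q) [NeZero q] (p n : ℤ) :
    Gm p q n * (starRingEnd ℂ) (Gm p q n)
      = ∑ m : ZMod q, chi q (f p n (m.val : ℤ)) *
          (if (((-(2 * p) * (m.val : ℤ)) : ℤ) : ZMod q) = 0 then (q : ℂ) else 0) := by
  rw [Gm_eq_zmod hq p n, map_sum]
  have hconj : ∀ y : ZMod q, (starRingEnd ℂ) (chi q (f p n (y.val : ℤ)))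
      = chi q (-(f p n (y.val : ℤ))) := fun y => conj_chi q _
  rw [Finset.sum_congr rfl fun y _ => hconj y, Finset.sum_mul_sum]
  -- swap: outer x, inner y; reindex x = y + m
  rw [Finset.sum_comm]
  have hterm : ∀ y m : ZMod q,
      chi q (f p n ((y + m).val : ℤ)) * chi q (-(f p n (y.val : ℤ)))
        = chi q (f p n (m.val : ℤ)) * chi q ((-(2 * p) * (m.val : ℤ)) * (y.val : ℤ)) := by
    intro y m
    rw [chi_f_congr hq p n (val_add_congr y m), ← chi_add, ← chi_add]
    congr 1
    unfold f
    ring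
  have hre : ∀ y : ZMod q,
      ∑ x : ZMod q, chi q (f p n (x.val : ℤ)) * chi q (-(f p n (y.val : ℤ)))
        = ∑ m : ZMod q, chi q (f p n (m.val : ℤ)) * chi q ((-(2 * p) * (m.val : ℤ)) * (y.val : ℤ)) := by
    intro y
    rw [← Fintype.sum_equiv (Equiv.addLeft y)
      (fun m => chi q (f p n ((y + m).val : ℤ)) * chi q (-(f p n (y.val : ℤ))))
      (fun x => chi q (f p n (x.val : ℤ)) * chi q (-(f p n (y.val : ℤ))))
      (fun m => rfl)]
    exact Finset.sum_congr rfl fun m _ => hterm y m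
  rw [Finset.sum_congr rfl fun y _ => hre y, Finset.sum_comm]
  refine Finset.sum_congr rfl fun m _ => ?_
  rw [← Finset.mul_sum, sum_chi_mul hq]

end GmAux

namespace GmAux

variable {q : ℕ} {p : ℤ}

lemma cast_val [NeZero q] (m : ZMod q) : ((m.val : ℕ) : ZMod q) = m :=
  ZMod.natCast_rightInverse m

lemma cond_iff (hq : 1 ≤ q) [NeZero q] (hpq : Int.gcd p (q : ℤ) = 1) (m : ZMod q) :
    ((((-(2 * p) * (m.val : ℤ)) : ℤ)) : ZMod q) = 0 ↔ 2 * m = 0 := by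
  obtain ⟨u, v, huv⟩ := Int.isCoprime_iff_gcd_eq_one.mpr hpq
  have hpu : (u : ZMod q) * (p : ZMod q) = 1 := by
    have := congrArg (fun x : ℤ => (x : ZMod q)) huv
    push_cast at this
    simpa [ZMod.natCast_self] using this
  have hcast : ((((-(2 * p) * (m.val : ℤ)) : ℤ)) : ZMod q)
      = -((p : ZMod q) * (2 * m)) := by
    push_cast [cast_val]
    simp [cast_val]
    ring
  rw [hcast]
  constructor
  · intro h
    have h2 : (p : ZMod q) * (2 * m) = 0 := by
      have := congrArg Neg.neg h
      simpa using this
    calc 2 * m = ((u : ZMod q) * (p : ZMod q)) * (2 * m) := by rw [hpu, one_mul]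
      _ = (u : ZMod q) * ((p : ZMod q) * (2 * m)) := by ring
      _ = 0 := by rw [h2, mul_zero]
  · intro h
    rw [h, mul_zero, neg_zero]

lemma two_mul_eq_zero_iff (hq : 1 ≤ q) [NeZero q] (m : ZMod q) :
    2 * m = 0 ↔ q ∣ 2 * m.val := by
  constructor
  · intro h
    rw [← ZMod.natCast_eq_zero_iff]
    push_cast
    simp only [cast_val]
    exact h
  · intro h
    have h2 : ((2 * m.val : ℕ) : ZMod q) = 0 := (ZMod.natCast_eq_zero_iff _ _).mpr h
    push_cast at h2
    simp only [cast_val] at h2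
    exact h2

lemma f_zero (n : ℤ) : f p n 0 = 0 := by unfold f; ring

lemma normsq_odd (hq : 1 ≤ q) [NeZero q] (hpq : Int.gcd p (q : ℤ) = 1) (hodd : Odd q) (n : ℤ) :
    Gm p q n * (starRingEnd ℂ) (Gm p q n) = (q : ℂ) := by
  rw [normsq hq p n]
  rw [Finset.sum_eq_single_of_mem (0 : ZMod q) (Finset.mem_univ _)]
  · rw [if_pos, ZMod.val_zero]
    · norm_num [f_zero, chi]
    · rw [cond_iff hq hpq]
      norm_num
  · intro b _ hb
    rw [if_neg, mul_zero]
    rw [cond_iff hq hpq, two_mul_eq_zero_iff hq]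
    intro hdvd
    obtain ⟨t, ht⟩ := hdvd
    have hlt : b.val < q := ZMod.val_lt b
    have ht2 : t < 2 := by nlinarith
    obtain ⟨s, hs⟩ := hodd
    have : b.val = 0 := by interval_cases t <;> omega
    exact hb (by rw [← cast_val b, this]; norm_num)

end GmAux

namespace GmAux

variable {q : ℕ} {p : ℤ}

lemma zet_pow_r (hq : 1 ≤ q) {r : ℕ} (hr : 1 ≤ r) (hqr : q = 2 * r) :
    zet q ^ (r : ℤ) = -1 := by
  have hsq : (zet q ^ (r : ℤ)) ^ 2 = 1 := by
    have : (zet q ^ (r : ℤ)) ^ 2 = chi q (2 * r) := by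
      rw [chi, ← zpow_natCast (zet q ^ (r : ℤ)) 2, ← zpow_mul]
      congr 1
      push_cast
      ring
    rw [this]
    exact chi_dvd hq ⟨1, by push_cast; omega⟩
  have hne : zet q ^ (r : ℤ) ≠ 1 := by
    intro h
    have hd := (chi_eq_one_iff hq (r : ℤ)).mp h
    have := Int.le_of_dvd (by exact_mod_cast hr) hd
    omega
  have hfac : (zet q ^ (r : ℤ) - 1) * (zet q ^ (r : ℤ) + 1) = 0 := by
    have : (zet q ^ (r : ℤ) - 1) * (zet q ^ (r : ℤ) + 1) = (zet q ^ (r : ℤ)) ^ 2 - 1 := by ring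
    rw [this, hsq, sub_self]
  rcases mul_eq_zero.mp hfac with h | h
  · exact absurd (by linear_combination h) hne
  · linear_combination h

lemma chi_f_r (hq : 1 ≤ q) {r : ℕ} (hr : 1 ≤ r) (hqr : q = 2 * r) (n : ℤ) :
    chi q (f p n (r : ℤ)) = (-1 : ℂ) ^ (n - p * r) := by
  have : f p n (r : ℤ) = (r : ℤ) * (n - p * r) := by unfold f; ring
  rw [chi, this, zpow_mul, zet_pow_r hq hr hqr]

lemma normsq_even (hq : 1 ≤ q) [NeZero q] (hpq : Int.gcd p (q : ℤ) = 1)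
    {r : ℕ} (hr : 1 ≤ r) (hqr : q = 2 * r) (n : ℤ) :
    Gm p q n * (starRingEnd ℂ) (Gm p q n)
      = (q : ℂ) * (1 + (-1 : ℂ) ^ (n - p * r)) := by
  have hrq : r < q := by omega
  have hR : ((r : ℕ) : ZMod q) ≠ 0 := by
    intro h
    rw [ZMod.natCast_eq_zero_iff] at h
    have := Nat.le_of_dvd (by omega) h
    omega
  have hmem : ∀ m : ZMod q, 2 * m = 0 ↔ m = 0 ∨ m = ((r : ℕ) : ZMod q) := by
    intro m
    rw [two_mul_eq_zero_iff hq]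
    constructor
    · intro hdvd
      obtain ⟨t, ht⟩ := hdvd
      have hlt : m.val < q := ZMod.val_lt m
      have ht2 : t < 2 := by nlinarith
      interval_cases t
      · left
        rw [← cast_val m]
        have : m.val = 0 := by omega
        rw [this]; norm_num
      · right
        rw [← cast_val m]
        have : m.val = r := by omega
        rw [this]
    · rintro (rfl | rfl)
      · simp
      · refine ⟨1, ?_⟩
        rw [ZMod.val_cast_of_lt hrq]
        omega
  rw [normsq hq p n]
  have hsub : (Finset.univ : Finset (ZMod q)) ⊇ ({0, ((r : ℕ) : ZMod q)} : Finset (ZMod q)) :=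
    Finset.subset_univ _
  rw [← Finset.sum_subset hsub (fun x _ hx => ?_)]
  · rw [Finset.sum_pair (Ne.symm hR)]
    rw [if_pos, if_pos]
    · rw [ZMod.val_zero, ZMod.val_cast_of_lt hrq]
      have h0 : chi q (f p n ((0 : ℕ) : ℤ)) = 1 := by
        norm_num
        rw [f_zero, chi, zpow_zero]
      norm_num [chi_f_r hq hr hqr n]
      rw [show f p n 0 = 0 from by unfold f; ring, chi, zpow_zero]
      ring
    · rw [cond_iff hq hpq, hmem]; right; rfl
    · rw [cond_iff hq hpq, hmem]; left; rfl
  · rw [if_neg, mul_zero]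
    rw [cond_iff hq hpq, hmem]
    intro h
    rcases h with h | h <;> simp [h] at hx

end GmAux

namespace GmAux

lemma master (p : ℤ) (q : ℕ) (hq : 1 ≤ q) (hpq : Int.gcd p (q : ℤ) = 1) (n : ℤ) :
    Gm p q n = 0 ↔ (4 : ℤ) ∣ (2 * n + 2 - (q : ℤ)) := by
  haveI : NeZero q := ⟨by omega⟩
  have hq0 : (q : ℂ) ≠ 0 := Nat.cast_ne_zero.mpr (by omega)
  rcases Nat.even_or_odd q with heven | hodd
  · obtain ⟨r, hqr⟩ := heven
    have hqr' : q = 2 * r := by omega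
    have hr : 1 ≤ r := by omega
    have hpodd : Odd p := by
      rcases Int.even_or_odd p with ⟨a, ha⟩ | h
      · exfalso
        have h2 : (2 : ℤ) ∣ (Int.gcd p (q : ℤ) : ℤ) :=
          Int.dvd_coe_gcd ⟨a, by omega⟩ ⟨(r : ℤ), by push_cast; omega⟩
        rw [hpq] at h2
        norm_num at h2
      · exact h
    have heq := normsq_even hq hpq hr hqr' n
    have hsplit : Gm p q n = 0 ↔ Gm p q n * (starRingEnd ℂ) (Gm p q n) = 0 := by
      constructor
      · intro h; rw [h, zero_mul]
      · intro h
        rcases mul_eq_zero.mp h with h | h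
        · exact h
        · exact (map_eq_zero _).mp h
    have key : (1 + (-1 : ℂ) ^ (n - p * r) = 0) ↔ Odd (n - p * (r : ℤ)) := by
      rcases Int.even_or_odd (n - p * r) with he | ho
      · rw [he.neg_one_zpow]
        norm_num
        exact he
      · rw [ho.neg_one_zpow]
        norm_num
        exact ho
    have arith : Odd (n - p * (r : ℤ)) ↔ (4 : ℤ) ∣ (2 * n + 2 - (q : ℤ)) := by
      obtain ⟨a, ha⟩ := hpodd
      have hnr : n - p * (r : ℤ) = n - r - 2 * (a * (r : ℤ)) := by rw [ha]; ring
      have hqz : (q : ℤ) = 2 * (r : ℤ) := by push_cast; omega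
      rw [hnr, Int.odd_iff, hqz]
      set c := a * (r : ℤ) with hc
      omega
    calc Gm p q n = 0
        ↔ (q : ℂ) * (1 + (-1 : ℂ) ^ (n - p * r)) = 0 := hsplit.trans (by rw [heq])
      _ ↔ 1 + (-1 : ℂ) ^ (n - p * r) = 0 := by
          rw [mul_eq_zero]
          simp [hq0]
      _ ↔ Odd (n - p * (r : ℤ)) := key
      _ ↔ (4 : ℤ) ∣ (2 * n + 2 - (q : ℤ)) := arith
  · have heq := normsq_odd hq hpq hodd n
    refine iff_of_false ?_ ?_
    · intro h
      rw [h, zero_mul] at heq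
      exact hq0 heq.symm
    · obtain ⟨s, hs⟩ := hodd
      omega

end GmAux

theorem stmt8 (p : ℤ) (q : ℕ) (hq : 1 ≤ q) (hpq : Int.gcd p (q : ℤ) = 1)
    (n : ℕ) (hn : n < q) :
    (Gm p q (n : ℤ) = 0 ↔ (4 : ℤ) ∣ (2 * (n : ℤ) + 2 - (q : ℤ))) ∧
    (Odd q → ∀ m : ℕ, m < q → Gm p q (m : ℤ) ≠ 0) := by
  refine ⟨GmAux.master p q hq hpq n, fun hodd m _ h => ?_⟩
  have := (GmAux.master p q hq hpq m).mp h
  obtain ⟨s, hs⟩ := hodd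
  omega
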